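/- Let Φ be a homogeneous IFS on ℝ^d with attractor X and maps S_i(x) = λx + (1−λ)p_i, and T_i the inverse of S_i. If a ∈ D^ℕ is a universal coding of x (i.e., π(a) = x and every finite word over D occurs as a factor of a), then the orbit {(T_{a_j} ∘ ⋯ ∘ T_{a_1})(x) : j ≥ 1} is dense in X. -/

import Mathlib

open Finset

section Aux
variable {E : Type*} [NormedAddCommGroup E] [NormedSpace ℝ E] [CompleteSpace E]
variable {n : ℕ} (p : Fin (n+1) → E) (lam : ℝ)

lemma aux_summable (h0 : 0 < lam) (h1 : lam < 1) (c : ℕ → Fin (n+1)) :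
    Summable (fun k => ((1 - lam) * lam ^ k) • p (c k)) := by
  obtain ⟨M, hM⟩ : ∃ M, ∀ i, ‖p i‖ ≤ M :=
    ⟨Finset.univ.sup' ⟨0, Finset.mem_univ 0⟩ (fun i => ‖p i‖),
      fun i => Finset.le_sup' (fun i => ‖p i‖) (Finset.mem_univ i)⟩
  apply Summable.of_norm_bounded (g := fun k => ((1 - lam) * M) * lam ^ k)
  · exact (summable_geometric_of_lt_one h0.le h1).mul_left _
  · intro k
    have h1' : (0:ℝ) ≤ 1 - lam := by linarith
    rw [norm_smul, Real.norm_eq_abs, abs_of_nonneg (mul_nonneg h1' (pow_nonneg h0.le k))]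
    calc (1 - lam) * lam ^ k * ‖p (c k)‖ ≤ (1 - lam) * lam ^ k * M := by
          apply mul_le_mul_of_nonneg_left (hM _) (mul_nonneg h1' (pow_nonneg h0.le k))
      _ = (1 - lam) * M * lam ^ k := by ring

lemma aux_split (h0 : 0 < lam) (h1 : lam < 1) (c : ℕ → Fin (n+1)) (m : ℕ) :
    ∑' k, ((1 - lam) * lam ^ k) • p (c k)
      = (∑ k ∈ range m, ((1 - lam) * lam ^ k) • p (c k))
        + lam ^ m • ∑' k, ((1 - lam) * lam ^ k) • p (c (k + m)) := by
  rw [← Summable.sum_add_tsum_nat_add m (aux_summable p lam h0 h1 c)]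
  congr 1
  rw [← Summable.tsum_const_smul (lam ^ m) (aux_summable p lam h0 h1 (fun k => c (k + m)))]
  apply tsum_congr; intro k
  rw [smul_smul]
  congr 1
  rw [pow_add]; ring

lemma aux_bound (h0 : 0 < lam) (h1 : lam < 1) :
    ∃ B : ℝ, ∀ c : ℕ → Fin (n+1), ‖∑' k, ((1 - lam) * lam ^ k) • p (c k)‖ ≤ B := by
  obtain ⟨M, hM⟩ : ∃ M, ∀ i, ‖p i‖ ≤ M :=
    ⟨Finset.univ.sup' ⟨0, Finset.mem_univ 0⟩ (fun i => ‖p i‖),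
      fun i => Finset.le_sup' (fun i => ‖p i‖) (Finset.mem_univ i)⟩
  refine ⟨(1 - lam) * M * (1 - lam)⁻¹, fun c => ?_⟩
  apply tsum_of_norm_bounded (((hasSum_geometric_of_lt_one h0.le h1).mul_left ((1 - lam) * M)))
  intro k
  have h1' : (0:ℝ) ≤ 1 - lam := by linarith
  rw [norm_smul, Real.norm_eq_abs, abs_of_nonneg (mul_nonneg h1' (pow_nonneg h0.le k))]
  calc (1 - lam) * lam ^ k * ‖p (c k)‖ ≤ (1 - lam) * lam ^ k * M := by
        apply mul_le_mul_of_nonneg_left (hM _) (mul_nonneg h1' (pow_nonneg h0.le k))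
    _ = (1 - lam) * M * lam ^ k := by ring

lemma aux_piMem (h0 : 0 < lam) (h1 : lam < 1) (X : Set E) (hXne : X.Nonempty)
    (hXcl : IsClosed X)
    (hfix : X = ⋃ i, (fun x => lam • x + (1 - lam) • p i) '' X) (c : ℕ → Fin (n+1)) :
    (∑' k, ((1 - lam) * lam ^ k) • p (c k)) ∈ X := by
  obtain ⟨x0, hx0⟩ := hXne
  have key : ∀ m, ∀ c : ℕ → Fin (n+1),
      ((∑ k ∈ range m, ((1 - lam) * lam ^ k) • p (c k)) + lam ^ m • x0) ∈ X := by
    intro m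
    induction m with
    | zero => intro c; simpa using hx0
    | succ m ih =>
      intro c
      rw [hfix]
      refine Set.mem_iUnion.2 ⟨c 0, ⟨_, ih (fun k => c (k + 1)), ?_⟩⟩
      simp only
      have hs : lam • (∑ k ∈ range m, ((1 - lam) * lam ^ k) • p (c (k + 1)))
          = ∑ k ∈ range m, ((1 - lam) * lam ^ (k + 1)) • p (c (k + 1)) := by
        rw [Finset.smul_sum]
        apply Finset.sum_congr rfl
        intro k _
        rw [smul_smul]
        congr 1
        ring
      rw [Finset.sum_range_succ', smul_add, hs, smul_smul, ← pow_succ']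
      simp only [pow_zero, mul_one]
      abel
  obtain ⟨B, hB⟩ := aux_bound p lam h0 h1
  rw [← hXcl.closure_eq]
  rw [Metric.mem_closure_iff]
  intro ε hε
  obtain ⟨m, hm⟩ : ∃ m, lam ^ m < ε / (B + ‖x0‖ + 1) := by
    apply exists_pow_lt_of_lt_one _ h1
    have : (0:ℝ) < B + ‖x0‖ + 1 := by
      have := le_trans (norm_nonneg _) (hB c); positivity
    positivity
  refine ⟨_, key m c, ?_⟩
  rw [dist_eq_norm, aux_split p lam h0 h1 c m]
  have : (∑ k ∈ range m, ((1 - lam) * lam ^ k) • p (c k))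
        + lam ^ m • (∑' k, ((1 - lam) * lam ^ k) • p (c (k + m)))
      - ((∑ k ∈ range m, ((1 - lam) * lam ^ k) • p (c k)) + lam ^ m • x0)
      = lam ^ m • ((∑' k, ((1 - lam) * lam ^ k) • p (c (k + m))) - x0) := by
    rw [smul_sub]; abel
  rw [this, norm_smul, Real.norm_eq_abs, abs_of_nonneg (pow_nonneg h0.le m)]
  have hBp : (0:ℝ) ≤ B := le_trans (norm_nonneg _) (hB c)
  calc lam ^ m * ‖(∑' k, ((1 - lam) * lam ^ k) • p (c (k + m))) - x0‖
      ≤ lam ^ m * (B + ‖x0‖ + 1) := by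
        apply mul_le_mul_of_nonneg_left _ (pow_nonneg h0.le m)
        calc ‖(∑' k, ((1 - lam) * lam ^ k) • p (c (k + m))) - x0‖
            ≤ ‖∑' k, ((1 - lam) * lam ^ k) • p (c (k + m))‖ + ‖x0‖ := norm_sub_le _ _
          _ ≤ B + ‖x0‖ + 1 := by have := hB (fun k => c (k + m)); linarith
    _ < ε := by
        rw [← lt_div_iff₀ (by have : (0:ℝ) ≤ B := hBp; positivity)] at *
        exact hm

lemma aux_expand (h0 : 0 < lam) (h1 : lam < 1) (X : Set E)
    (hfix : X = ⋃ i, (fun x => lam • x + (1 - lam) • p i) '' X) (m : ℕ) :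
    ∀ z ∈ X, ∃ (b : ℕ → Fin (n+1)) (w : E), w ∈ X ∧
      z = (∑ k ∈ range m, ((1 - lam) * lam ^ k) • p (b k)) + lam ^ m • w := by
  induction m with
  | zero => intro z hz; exact ⟨fun _ => 0, z, hz, by simp⟩
  | succ m ih =>
    intro z hz
    obtain ⟨b, w, hw, hzeq⟩ := ih z hz
    rw [hfix] at hw
    obtain ⟨i, w', hw', hweq⟩ := Set.mem_iUnion.1 hw
    refine ⟨fun k => if k = m then i else b k, w', hw', ?_⟩
    beta_reduce
    rw [Finset.sum_range_succ, if_pos rfl]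
    have hsum : ∑ k ∈ range m, ((1 - lam) * lam ^ k) • p (if k = m then i else b k)
        = ∑ k ∈ range m, ((1 - lam) * lam ^ k) • p (b k) := by
      apply Finset.sum_congr rfl
      intro k hk
      rw [if_neg (Nat.ne_of_lt (Finset.mem_range.1 hk))]
    rw [hsum, hzeq, ← hweq]
    simp only
    rw [smul_add, smul_smul, smul_smul, ← pow_succ, mul_comm (lam ^ m) (1 - lam)]
    abel

lemma aux_step (h0 : 0 < lam) (h1 : lam < 1) (a : ℕ → Fin (n+1)) (m : ℕ) :
    lam⁻¹ • ((∑' k, ((1 - lam) * lam ^ k) • p (a (k + m))) - (1 - lam) • p (a m))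
      = ∑' k, ((1 - lam) * lam ^ k) • p (a (k + (m + 1))) := by
  have h := aux_split p lam h0 h1 (fun k => a (k + m)) 1
  rw [Finset.sum_range_one, pow_zero, mul_one, pow_one, Nat.zero_add] at h
  rw [h, add_sub_cancel_left, smul_smul, inv_mul_cancel₀ (ne_of_gt h0), one_smul]
  apply tsum_congr
  intro k
  rw [show k + 1 + m = k + (m + 1) from by omega]

lemma aux_orbit (h0 : 0 < lam) (h1 : lam < 1) (a : ℕ → Fin (n+1)) (x : E)
    (hcode : x = ∑' j : ℕ, ((1 - lam) * lam ^ j) • p (a j)) (j : ℕ) :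
    ((List.range (j + 1)).map a).foldl (fun z i => lam⁻¹ • (z - (1 - lam) • p i)) x
      = ∑' k, ((1 - lam) * lam ^ k) • p (a (k + (j + 1))) := by
  induction j with
  | zero =>
    simp only [List.range_succ, List.range_zero, List.nil_append, List.map_cons, List.map_nil, List.foldl_cons, List.foldl_nil]
    have h := aux_step p lam h0 h1 a 0
    have e1 : (∑' k, ((1 - lam) * lam ^ k) • p (a (k + 0)))
        = ∑' j : ℕ, ((1 - lam) * lam ^ j) • p (a j) := by
      apply tsum_congr; intro k; rw [Nat.add_zero]
    rw [hcode, ← e1]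
    exact h
  | succ j ih =>
    rw [List.range_succ, List.map_append, List.foldl_append]
    simp only [List.map_cons, List.map_nil, List.foldl_cons, List.foldl_nil]
    rw [ih]
    exact aux_step p lam h0 h1 a (j + 1)
end Aux





/-- for a homogeneous IFS `S_i(x) = λx + (1-λ)p_i` with attractor `X` and
inverse maps `T_i`, if `a` is a universal coding of `x ∈ X` (i.e. `π(a) = x` and every
finite word over the digit set occurs as a factor of `a`), then the orbit
`{(T_{a_j} ∘ ⋯ ∘ T_{a_1})(x) : j ≥ 1}` is dense in `X`. -/
theorem universal_coding_dense_orbit (d n : ℕ)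
    (p : Fin (n + 1) → EuclideanSpace ℝ (Fin d))
    (lam : ℝ) (hlam : lam ∈ Set.Ioo (0 : ℝ) 1)
    (X : Set (EuclideanSpace ℝ (Fin d))) (hX : X.Nonempty) (hXc : IsCompact X)
    (hfix : X = ⋃ i, (fun x => lam • x + (1 - lam) • p i) '' X)
    (x : EuclideanSpace ℝ (Fin d)) (hx : x ∈ X)
    (a : ℕ → Fin (n + 1))
    (hcode : x = ∑' j : ℕ, ((1 - lam) * lam ^ j) • p (a j))
    (huniv : ∀ b : List (Fin (n + 1)), ∃ m : ℕ, ∀ t : Fin b.length, a (m + t) = b.get t) :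
    X ⊆ closure {y | ∃ j : ℕ,
      y = ((List.range (j + 1)).map a).foldl
        (fun z i => lam⁻¹ • (z - (1 - lam) • p i)) x} := by
  obtain ⟨h0, h1⟩ := hlam
  intro z hz
  rw [Metric.mem_closure_iff]
  intro ε hε
  obtain ⟨r, hr⟩ := hXc.isBounded.subset_closedBall 0
  have hr0 : (0:ℝ) ≤ r := le_trans (norm_nonneg x) (mem_closedBall_zero_iff.1 (hr hx))
  obtain ⟨m, hm⟩ : ∃ m, lam ^ m < ε / (2 * r + 1) :=
    exists_pow_lt_of_lt_one (by positivity) h1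
  obtain ⟨b, w, hw, hzeq⟩ := aux_expand p lam h0 h1 X hfix m z hz
  obtain ⟨m₀, hm₀⟩ := huniv ((a 0) :: List.ofFn (fun k : Fin m => b k))
  refine ⟨_, ⟨m₀, rfl⟩, ?_⟩
  rw [aux_orbit p lam h0 h1 a x hcode m₀]
  have hsplit := aux_split p lam h0 h1 (fun k => a (k + (m₀ + 1))) m
  rw [hsplit]
  have hdig : ∀ k ∈ range m,
      ((1 - lam) * lam ^ k) • p (a (k + (m₀ + 1))) = ((1 - lam) * lam ^ k) • p (b k) := by
    intro k hk
    have hk' := Finset.mem_range.1 hk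
    have hlen : k + 1 < ((a 0) :: List.ofFn (fun k : Fin m => b k)).length := by
      simp; omega
    have h2 := hm₀ ⟨k + 1, hlen⟩
    simp [List.get_ofFn] at h2
    rw [show k + (m₀ + 1) = m₀ + (k + 1) from by omega, h2]
  rw [Finset.sum_congr rfl hdig]
  set W := ∑' (k : ℕ), ((1 - lam) * lam ^ k) • p (a (k + m + (m₀ + 1))) with hW
  have hWmem : W ∈ X := by
    have := aux_piMem p lam h0 h1 X hX hXc.isClosed hfix (fun k => a (k + m + (m₀ + 1)))
    simpa using this
  rw [hzeq, dist_eq_norm]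
  have hmm : (∑ k ∈ range m, ((1 - lam) * lam ^ k) • p (b k)) + lam ^ m • w
      - ((∑ k ∈ range m, ((1 - lam) * lam ^ k) • p (b k)) + lam ^ m • W)
      = lam ^ m • (w - W) := by
    rw [smul_sub]; abel
  rw [hmm, norm_smul, Real.norm_eq_abs, abs_of_nonneg (pow_nonneg h0.le m)]
  have hwn : ‖w‖ ≤ r := mem_closedBall_zero_iff.1 (hr hw)
  have hWn : ‖W‖ ≤ r := mem_closedBall_zero_iff.1 (hr hWmem)
  calc lam ^ m * ‖w - W‖ ≤ lam ^ m * (2 * r + 1) := by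
        apply mul_le_mul_of_nonneg_left _ (pow_nonneg h0.le m)
        have := norm_sub_le w W
        linarith
    _ < ε := (lt_div_iff₀ (by positivity)).1 hm
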